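/- Every monotone submodular function f: {0,1}^n → {0,1,...,k} can be represented by a monotone pseudo-Boolean k-DNF with constants a_t ∈ {0,1,...,k}. -/

import Mathlib

/-- Every monotone submodular function `f : 2^[n] → {0,…,k}` can be
represented by a monotone pseudo-Boolean k-DNF with constants in `{0,…,k}`
(monotone means no negated variables, i.e. `B_t = ∅`). -/
theorem monotone_submodular_repr_k_dnf (n k : ℕ) (f : Finset (Fin n) → ℕ)
    (hrange : ∀ S, f S ≤ k)
    (hmono : ∀ S T : Finset (Fin n), S ⊆ T → f S ≤ f T)
    (hsub : ∀ S T : Finset (Fin n), f (S ∪ T) + f (S ∩ T) ≤ f S + f T) :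
    ∃ (s : ℕ) (a : Fin s → ℕ) (A : Fin s → Finset (Fin n)),
      (∀ t, a t ≤ k) ∧
      (∀ t, (A t).card ≤ k) ∧
      (∀ S : Finset (Fin n),
        f S = Finset.univ.sup fun t => if A t ⊆ S then a t else 0) := by
  classical
  -- Key lemma: every S has a small subset achieving its value
  have key : ∀ S : Finset (Fin n), ∃ B, B ⊆ S ∧ B.card ≤ f S ∧ f S ≤ f B := by
    intro S
    have step : ∀ A : Finset (Fin n), A ⊆ S → f A < f S →
        ∃ x, x ∈ S ∧ x ∉ A ∧ f A + 1 ≤ f (insert x A) := by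
      intro A hAS hlt
      by_contra h
      push_neg at h
      have hall : ∀ x ∈ S, f (insert x A) ≤ f A := by
        intro x hx
        by_cases hxA : x ∈ A
        · simp [Finset.insert_eq_self.2 hxA]
        · exact Nat.lt_succ_iff.mp (h x hx hxA)
      have hT : ∀ T : Finset (Fin n), T ⊆ S → f (A ∪ T) ≤ f A := by
        intro T
        induction T using Finset.induction_on with
        | empty => intro _; simp
        | insert _ _ hx ih =>
          rename_i x T
          intro hsub2
          have hxS : x ∈ S := hsub2 (Finset.mem_insert_self _ _)
          have hTS : T ⊆ S := (Finset.insert_subset_iff.mp hsub2).2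
          have h1 := hsub (A ∪ T) (insert x A)
          have hunion : (A ∪ T) ∪ insert x A = A ∪ insert x T := by
            ext y
            simp only [Finset.mem_union, Finset.mem_insert]
            tauto
          have hAint : A ⊆ (A ∪ T) ∩ insert x A := by
            intro y hy
            simp only [Finset.mem_inter, Finset.mem_union, Finset.mem_insert]
            tauto
          have h2 := hmono _ _ hAint
          have h3 := hall x hxS
          have h4 := ih hTS
          rw [hunion] at h1
          omega
      have := hT S subset_rfl
      rw [Finset.union_eq_right.2 hAS] at this
      omega
    have greedy : ∀ j (A : Finset (Fin n)), A ⊆ S → f S ≤ f A + j →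
        ∃ B, A ⊆ B ∧ B ⊆ S ∧ B.card ≤ A.card + j ∧ f S ≤ f B := by
      intro j
      induction j with
      | zero =>
        intro A hAS hle
        exact ⟨A, subset_rfl, hAS, by omega, by omega⟩
      | succ j ih =>
        intro A hAS hle
        by_cases hfin : f S ≤ f A
        · exact ⟨A, subset_rfl, hAS, by omega, hfin⟩
        · obtain ⟨x, hxS, hxA, hgain⟩ := step A hAS (lt_of_not_ge hfin)
          obtain ⟨B, hAB, hBS, hcard, hfb⟩ :=
            ih (insert x A) (Finset.insert_subset hxS hAS) (by omega)
          refine ⟨B, (Finset.subset_insert _ _).trans hAB, hBS, ?_, hfb⟩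
          have := Finset.card_insert_of_notMem hxA
          omega
    obtain ⟨B, _, hBS, hcard, hfb⟩ := greedy (f S) ∅ (Finset.empty_subset S) (by simp)
    exact ⟨B, hBS, by simpa using hcard, hfb⟩
  have hcardeq : Fintype.card (Finset (Fin n)) = 2 ^ n := by simp
  let e : Fin (2 ^ n) ≃ Finset (Fin n) :=
    (Fintype.equivFinOfCardEq hcardeq).symm
  refine ⟨2 ^ n, fun t => f (if (e t).card ≤ k then e t else ∅),
    fun t => if (e t).card ≤ k then e t else ∅, fun t => hrange _, fun t => ?_, fun S => ?_⟩
  · dsimp only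
    split
    · assumption
    · simp
  · apply le_antisymm
    · obtain ⟨B, hBS, hcard, hfb⟩ := key S
      have hBk : B.card ≤ k := le_trans hcard (hrange S)
      have ht : e (e.symm B) = B := e.apply_symm_apply B
      have hmem : (e.symm B) ∈ (Finset.univ : Finset (Fin (2 ^ n))) := Finset.mem_univ _
      have := Finset.le_sup (f := fun t =>
        if (if (e t).card ≤ k then e t else ∅) ⊆ S
        then f (if (e t).card ≤ k then e t else ∅) else 0) hmem
      simp only [ht, if_pos hBk, if_pos hBS] at this
      exact le_trans hfb this
    · apply Finset.sup_le
      intro t _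
      split
      · exact hmono _ _ (by assumption)
      · exact Nat.zero_le _
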